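/- arXiv:1309.4365 — 5 statements merged into one kernel-verified Lean document; each statement's English description precedes it below -/
import Mathlib

section
/- Let d ≠ 0, 1/2 and let λ, μ : I → ℝ be differentiable functions on an open interval I with λ > 0 satisfying λ' = ((1-2d)/d)·λ·μ and μ' = -μ² - d(1-d)·λ². Then the function t ↦ λ(t)^(2d/(1-2d))·(μ(t)² + d²·λ(t)²) is constant on I. -/
/-- First integral of the ODE system for Lagrangian submanifolds of ℂⁿ:
if `λ' = ((1-2d)/d)·λ·μ` and `μ' = -μ² - d(1-d)·λ²` with `λ > 0` on an open
interval, then `λ^(2d/(1-2d))·(μ² + d²·λ²)` is constant on that interval. -/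
theorem stmt_0 (d : ℝ) (hd0 : d ≠ 0) (hd2 : d ≠ 1 / 2)
    (a b : ℝ) (lam mu : ℝ → ℝ)
    (hpos : ∀ t ∈ Set.Ioo a b, 0 < lam t)
    (hlam : ∀ t ∈ Set.Ioo a b,
      HasDerivAt lam ((1 - 2 * d) / d * lam t * mu t) t)
    (hmu : ∀ t ∈ Set.Ioo a b,
      HasDerivAt mu (-(mu t) ^ 2 - d * (1 - d) * (lam t) ^ 2) t) :
    ∀ s ∈ Set.Ioo a b, ∀ t ∈ Set.Ioo a b,
      lam s ^ (2 * d / (1 - 2 * d)) * ((mu s) ^ 2 + d ^ 2 * (lam s) ^ 2) =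
      lam t ^ (2 * d / (1 - 2 * d)) * ((mu t) ^ 2 + d ^ 2 * (lam t) ^ 2) := by
  set α : ℝ := 2 * d / (1 - 2 * d) with hα
  have hden : (1 : ℝ) - 2 * d ≠ 0 := by
    intro h; apply hd2; linarith
  set F : ℝ → ℝ := fun t => lam t ^ α * ((mu t) ^ 2 + d ^ 2 * (lam t) ^ 2) with hF
  have key : ∀ t ∈ Set.Ioo a b, HasDerivAt F 0 t := by
    intro t ht
    have hp := hpos t ht
    have hl := hlam t ht
    have hm := hmu t ht
    have h1 : HasDerivAt (fun t => lam t ^ α)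
        (((1 - 2 * d) / d * lam t * mu t) * α * lam t ^ (α - 1)) t :=
      hl.rpow_const (Or.inl hp.ne')
    have h2 : HasDerivAt (fun t => (mu t) ^ 2 + d ^ 2 * (lam t) ^ 2)
        ((2 : ℕ) * mu t ^ (2 - 1) * (-(mu t) ^ 2 - d * (1 - d) * (lam t) ^ 2)
          + d ^ 2 * ((2 : ℕ) * lam t ^ (2 - 1) * ((1 - 2 * d) / d * lam t * mu t))) t :=
      (hm.pow 2).add ((hl.pow 2).const_mul (d ^ 2))
    have h3 := h1.mul h2
    convert h3 using 1
    · rfl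
    · rfl
    · rfl
    have hsub : lam t ^ (α - 1) = lam t ^ α / lam t := Real.rpow_sub_one hp.ne' α
    have hlne := hp.ne'
    rw [hsub, hα]
    push_cast
    generalize lam t ^ (2 * d / (1 - 2 * d)) = X
    field_simp
    ring
  have hconv : Convex ℝ (Set.Ioo a b) := convex_Ioo a b
  intro s hs t ht
  have hdiff : DifferentiableOn ℝ F (Set.Ioo a b) := fun x hx =>
    ((key x hx).differentiableAt).differentiableWithinAt
  have hzero : ∀ x ∈ Set.Ioo a b, fderivWithin ℝ F (Set.Ioo a b) x = 0 := by
    intro x hx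
    have := ((key x hx).hasFDerivAt.hasFDerivWithinAt).fderivWithin
      (isOpen_Ioo.uniqueDiffOn x hx)
    rw [this]
    ext; simp
  exact hconv.is_const_of_fderivWithin_eq_zero hdiff hzero hs ht
end

section
/- Let λ, μ : I → ℝ be differentiable with λ' = ((1-2d)/d)·λ·μ and μ' = -1 - μ² - d(1-d)·λ², where d ≠ 0, 1/2. Then the function t ↦ λ(t)^(2d/(1-2d))·(1 + μ(t)² + d²·λ(t)²) is constant on any interval where λ > 0. -/
/-- First integral of the ODE system for Lagrangian submanifolds of ℂPⁿ(4):
if `λ' = ((1-2d)/d)·λ·μ` and `μ' = -1 - μ² - d(1-d)·λ²`, then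
`λ^(2d/(1-2d))·(1 + μ² + d²·λ²)` is constant on any interval where `λ > 0`. -/
theorem stmt_3 (d : ℝ) (hd0 : d ≠ 0) (hd2 : d ≠ 1 / 2)
    (a b : ℝ) (lam mu : ℝ → ℝ)
    (hlam : ∀ t ∈ Set.Ioo a b,
      HasDerivAt lam ((1 - 2 * d) / d * lam t * mu t) t)
    (hmu : ∀ t ∈ Set.Ioo a b,
      HasDerivAt mu (-1 - (mu t) ^ 2 - d * (1 - d) * (lam t) ^ 2) t)
    (hpos : ∀ t ∈ Set.Ioo a b, 0 < lam t) :
    ∀ s ∈ Set.Ioo a b, ∀ t ∈ Set.Ioo a b,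
      lam s ^ (2 * d / (1 - 2 * d)) * (1 + (mu s) ^ 2 + d ^ 2 * (lam s) ^ 2) =
      lam t ^ (2 * d / (1 - 2 * d)) * (1 + (mu t) ^ 2 + d ^ 2 * (lam t) ^ 2) := by
  set p : ℝ := 2 * d / (1 - 2 * d) with hp
  have hne : (1 : ℝ) - 2 * d ≠ 0 := by
    intro h; apply hd2; linarith
  set F : ℝ → ℝ := fun t => lam t ^ p * (1 + (mu t) ^ 2 + d ^ 2 * (lam t) ^ 2) with hF
  have key : ∀ t ∈ Set.Ioo a b, HasDerivAt F 0 t := by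
    intro t ht
    have hl := hlam t ht
    have hm := hmu t ht
    have hlp := hpos t ht
    have h1 : HasDerivAt (fun t => lam t ^ p)
        (p * lam t ^ (p - 1) * ((1 - 2 * d) / d * lam t * mu t)) t := by
      simpa [mul_comm, mul_assoc, mul_left_comm] using
        hl.rpow_const (p := p) (Or.inl hlp.ne')
    have h2 : HasDerivAt (fun t => 1 + (mu t) ^ 2 + d ^ 2 * (lam t) ^ 2)
        (2 * mu t * (-1 - (mu t) ^ 2 - d * (1 - d) * (lam t) ^ 2)
          + d ^ 2 * (2 * lam t * ((1 - 2 * d) / d * lam t * mu t))) t := by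
      have hmu2 : HasDerivAt (fun t => (mu t) ^ 2)
          (2 * mu t * (-1 - (mu t) ^ 2 - d * (1 - d) * (lam t) ^ 2)) t := by
        simpa [mul_comm, mul_assoc] using hm.fun_pow 2
      have hlam2 : HasDerivAt (fun t => d ^ 2 * (lam t) ^ 2)
          (d ^ 2 * (2 * lam t * ((1 - 2 * d) / d * lam t * mu t))) t := by
        have := (hl.pow 2).const_mul (d ^ 2)
        simpa [mul_comm, mul_assoc, mul_left_comm] using this
      simpa using ((hasDerivAt_const t (1:ℝ)).fun_add hmu2).fun_add hlam2
    have h3 := h1.mul h2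
    refine h3.congr_deriv ?_
    have hpe : lam t ^ (p - 1) * lam t = lam t ^ p := by
      rw [← Real.rpow_add_one hlp.ne']; ring_nf
    have hq : p * ((1 - 2 * d) / d) = 2 := by
      field_simp [hp]
      rw [hp, div_mul_cancel₀ _ hne]
    -- expand and show zero
    have expand : p * lam t ^ (p - 1) * ((1 - 2 * d) / d * lam t * mu t) *
          (1 + (mu t) ^ 2 + d ^ 2 * (lam t) ^ 2)
        = lam t ^ p * (p * ((1 - 2 * d) / d) * mu t *
            (1 + (mu t) ^ 2 + d ^ 2 * (lam t) ^ 2)) := by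
      rw [← hpe]; ring
    rw [expand, hq]
    have hd2' : d ^ 2 * (2 * lam t * ((1 - 2 * d) / d * lam t * mu t))
        = 2 * d * (1 - 2 * d) * (lam t) ^ 2 * mu t := by
      field_simp
    rw [hd2']
    ring
  intro s hs t ht
  have hdiff : DifferentiableOn ℝ F (Set.Ioo a b) := fun x hx =>
    ((key x hx).differentiableAt).differentiableWithinAt
  have hzero : ∀ x ∈ Set.Ioo a b, fderivWithin ℝ F (Set.Ioo a b) x = 0 := by
    intro x hx
    have hu : UniqueDiffWithinAt ℝ (Set.Ioo a b) x := isOpen_Ioo.uniqueDiffWithinAt hx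
    have := ((key x hx).hasFDerivAt.hasFDerivWithinAt).fderivWithin hu
    rw [this]; ext; simp
  exact (convex_Ioo a b).is_const_of_fderivWithin_eq_zero hdiff hzero hs ht
end

section
/- Let λ, μ : I → ℝ be differentiable with λ > 0, λ' = ((1-2d)/d)·λ·μ and μ' = 1 - μ² - d(1-d)·λ², where d ≠ 0, 1/2. Then the function t ↦ λ(t)^(2d/(1-2d))·(μ(t)² + d²·λ(t)² - 1) is constant on I. In particular, the sign of μ² + d²λ² - 1 is constant on I. -/
/-- First integral of the ODE system for Lagrangian submanifolds of ℂHⁿ(-4):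
if `λ > 0`, `λ' = ((1-2d)/d)·λ·μ` and `μ' = 1 - μ² - d(1-d)·λ²`, then
`λ^(2d/(1-2d))·(μ² + d²·λ² - 1)` is constant on `I`; in particular the sign of
`μ² + d²·λ² - 1` is constant on `I`. -/
theorem stmt_4 (d : ℝ) (hd0 : d ≠ 0) (hd2 : d ≠ 1 / 2)
    (a b : ℝ) (lam mu : ℝ → ℝ)
    (hpos : ∀ t ∈ Set.Ioo a b, 0 < lam t)
    (hlam : ∀ t ∈ Set.Ioo a b,
      HasDerivAt lam ((1 - 2 * d) / d * lam t * mu t) t)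
    (hmu : ∀ t ∈ Set.Ioo a b,
      HasDerivAt mu (1 - (mu t) ^ 2 - d * (1 - d) * (lam t) ^ 2) t) :
    (∀ s ∈ Set.Ioo a b, ∀ t ∈ Set.Ioo a b,
      lam s ^ (2 * d / (1 - 2 * d)) * ((mu s) ^ 2 + d ^ 2 * (lam s) ^ 2 - 1) =
      lam t ^ (2 * d / (1 - 2 * d)) * ((mu t) ^ 2 + d ^ 2 * (lam t) ^ 2 - 1)) ∧
    (∀ s ∈ Set.Ioo a b, ∀ t ∈ Set.Ioo a b,
      ((0 < (mu s) ^ 2 + d ^ 2 * (lam s) ^ 2 - 1 ↔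
        0 < (mu t) ^ 2 + d ^ 2 * (lam t) ^ 2 - 1) ∧
       ((mu s) ^ 2 + d ^ 2 * (lam s) ^ 2 - 1 = 0 ↔
        (mu t) ^ 2 + d ^ 2 * (lam t) ^ 2 - 1 = 0))) := by
  have h12 : (1 : ℝ) - 2 * d ≠ 0 := by
    intro h; apply hd2; linarith
  set α : ℝ := 2 * d / (1 - 2 * d) with hα
  set F : ℝ → ℝ := fun t => lam t ^ α * ((mu t) ^ 2 + d ^ 2 * (lam t) ^ 2 - 1)
    with hF
  have key : ∀ t ∈ Set.Ioo a b, HasDerivAt F 0 t := by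
    intro t ht
    have hl := hlam t ht
    have hm := hmu t ht
    have hp := hpos t ht
    have h1 : HasDerivAt (fun t => lam t ^ α)
        (α * lam t ^ (α - 1) * ((1 - 2 * d) / d * lam t * mu t)) t := by
      convert hl.rpow_const (Or.inl hp.ne') using 1
      ring
    have h2 : HasDerivAt (fun t => (mu t) ^ 2 + d ^ 2 * (lam t) ^ 2 - 1)
        (2 * mu t * (1 - (mu t) ^ 2 - d * (1 - d) * (lam t) ^ 2) +
          d ^ 2 * (2 * lam t * ((1 - 2 * d) / d * lam t * mu t))) t := by
      have := ((hm.pow 2).add ((hl.pow 2).const_mul (d ^ 2))).sub_const 1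
      refine this.congr_deriv ?_
      simp only [Nat.cast_ofNat, Nat.reduceSub, pow_one]
    have hsub : lam t ^ (α - 1) = lam t ^ α / lam t := by
      rw [Real.rpow_sub hp, Real.rpow_one]
    have hlne : lam t ≠ 0 := hp.ne'
    have h1' : HasDerivAt (fun t => lam t ^ α) (2 * lam t ^ α * mu t) t := by
      convert h1 using 1
      rw [hsub, hα]
      field_simp
    have h2' : HasDerivAt (fun t => (mu t) ^ 2 + d ^ 2 * (lam t) ^ 2 - 1)
        (2 * mu t * (1 - (mu t) ^ 2 - d ^ 2 * (lam t) ^ 2)) t := by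
      convert h2 using 1
      field_simp
      ring
    have := h1'.mul h2'
    refine this.congr_deriv ?_
    ring
  have hconst : ∀ s ∈ Set.Ioo a b, ∀ t ∈ Set.Ioo a b, F s = F t := by
    have hle : ∀ s ∈ Set.Ioo a b, ∀ t ∈ Set.Ioo a b, s ≤ t → F s = F t := by
      intro s hs t ht hst
      have hsub : Set.Icc s t ⊆ Set.Ioo a b := fun x hx =>
        ⟨lt_of_lt_of_le hs.1 hx.1, lt_of_le_of_lt hx.2 ht.2⟩
      have hcont : ContinuousOn F (Set.Icc s t) := fun x hx =>
        ((key x (hsub hx)).continuousAt).continuousWithinAt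
      have := constant_of_has_deriv_right_zero hcont
        (fun x hx => ((key x (hsub (Set.Ico_subset_Icc_self hx))).hasDerivWithinAt))
        t (Set.right_mem_Icc.2 hst)
      exact this.symm
    intro s hs t ht
    rcases le_total s t with h | h
    · exact hle s hs t ht h
    · exact (hle t ht s hs h).symm
  refine ⟨hconst, ?_⟩
  intro s hs t ht
  have heq := hconst s hs t ht
  have hPs : 0 < lam s ^ α := Real.rpow_pos_of_pos (hpos s hs) α
  have hPt : 0 < lam t ^ α := Real.rpow_pos_of_pos (hpos t ht) α
  simp only [hF] at heq
  set gs := (mu s) ^ 2 + d ^ 2 * (lam s) ^ 2 - 1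
  set gt := (mu t) ^ 2 + d ^ 2 * (lam t) ^ 2 - 1
  constructor
  · constructor
    · intro h; nlinarith
    · intro h; nlinarith
  · constructor
    · intro h
      have : lam t ^ α * gt = 0 := by rw [← heq, h, mul_zero]
      exact (mul_eq_zero.1 this).resolve_left hPt.ne'
    · intro h
      have : lam s ^ α * gs = 0 := by rw [heq, h, mul_zero]
      exact (mul_eq_zero.1 this).resolve_left hPs.ne'
end

section
/- Suppose real numbers n ≥ 3 (an integer), d, λ with λ ≠ 0, d ≠ 0, d ≠ 1/2 satisfy both S = (n-2)·d·(1-2d)²·λ² and S = (n+2d)·d·(1-2d)·λ² for some S ≥ 0. Then d = 1/(1-n) and S ≥ 0 forces d ≥ 0, giving a contradiction; hence no such S exists. -/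
/-- The algebraic contradiction in the proof of Lemma 2.1(i): for `n ≥ 3`,
`λ ≠ 0`, `d ≠ 0, 1/2`, there is no `S ≥ 0` equal simultaneously to
`(n-2)·d·(1-2d)²·λ²` and `(n+2d)·d·(1-2d)·λ²`. -/
theorem stmt_6 (n : ℕ) (hn : 3 ≤ n) (d lam : ℝ)
    (hlam : lam ≠ 0) (hd0 : d ≠ 0) (hd2 : d ≠ 1 / 2) :
    ¬ ∃ S : ℝ, 0 ≤ S ∧
      S = ((n : ℝ) - 2) * d * (1 - 2 * d) ^ 2 * lam ^ 2 ∧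
      S = ((n : ℝ) + 2 * d) * d * (1 - 2 * d) * lam ^ 2 := by
  rintro ⟨S, hS, h1, h2⟩
  have hn3 : (3 : ℝ) ≤ n := by exact_mod_cast hn
  have hl2 : 0 < lam ^ 2 := by positivity
  have hdd : 1 - 2 * d ≠ 0 := by
    intro h; apply hd2; linarith
  -- from h1 = h2 derive d = -1/(n-1)
  have key : d * (n - 1) = -1 := by
    have h := h1.symm.trans h2
    have h' : ((n:ℝ) - 2) * d * (1 - 2 * d) ^ 2 = ((n:ℝ) + 2 * d) * d * (1 - 2 * d) := by
      have := mul_right_cancel₀ (pow_ne_zero 2 hlam) h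
      linarith [this]
    have h'' : d * (1 - 2 * d) * (2 * (d * (n - 1) + 1)) = 0 := by ring_nf; ring_nf at h'; linarith
    rcases mul_eq_zero.mp h'' with h3 | h3
    · rcases mul_eq_zero.mp h3 with h4 | h4
      · exact absurd h4 hd0
      · exact absurd h4 hdd
    · linarith
  have hdneg : d < 0 := by nlinarith
  nlinarith [sq_nonneg (1 - 2 * d), mul_pos hl2 (mul_pos (by nlinarith : (0:ℝ) < (n-2) * (-d)) (by nlinarith : (0:ℝ) < (1 - 2*d)^2))]
end

section
/- Let λ, μ : I → ℝ be positive differentiable functions with λ' = ((1-2d)/d)·λ·μ for d ∉ {0, 1/2}, and suppose c + μ² + d²λ² satisfies (c + μ² + d²λ²)' = -2μ·(c + μ² + d²λ²). Then (λ^{2d/(1-2d)}·(c + μ² + d²λ²))' = 0 on I. -/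
/-- General conserved quantity covering all ambient curvatures `c`: if `λ > 0`,
`λ' = ((1-2d)/d)·λ·μ` and `F = c + μ² + d²λ²` satisfies `F' = -2μ·F`, then
`(λ^(2d/(1-2d))·F)' = 0` on the interval. -/
theorem stmt_16 (d c : ℝ) (hd0 : d ≠ 0) (hd2 : d ≠ 1 / 2)
    (a b : ℝ) (lam mu : ℝ → ℝ)
    (hpos : ∀ t ∈ Set.Ioo a b, 0 < lam t)
    (hmupos : ∀ t ∈ Set.Ioo a b, 0 < mu t)
    (hlam : ∀ t ∈ Set.Ioo a b,
      HasDerivAt lam ((1 - 2 * d) / d * lam t * mu t) t)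
    (hF : ∀ t ∈ Set.Ioo a b,
      HasDerivAt (fun s => c + (mu s) ^ 2 + d ^ 2 * (lam s) ^ 2)
        (-2 * mu t * (c + (mu t) ^ 2 + d ^ 2 * (lam t) ^ 2)) t) :
    ∀ t ∈ Set.Ioo a b,
      HasDerivAt
        (fun s => lam s ^ (2 * d / (1 - 2 * d)) *
          (c + (mu s) ^ 2 + d ^ 2 * (lam s) ^ 2)) 0 t := by
  intro t ht
  have hlt := hpos t ht
  set p : ℝ := 2 * d / (1 - 2 * d) with hp
  have hpow : HasDerivAt (fun s => lam s ^ p)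
      ((1 - 2 * d) / d * lam t * mu t * p * lam t ^ (p - 1)) t :=
    (hlam t ht).rpow_const (Or.inl hlt.ne')
  have hmul := hpow.mul (hF t ht)
  have hd2' : 1 - 2 * d ≠ 0 := by
    intro h; apply hd2; linarith
  have hkey : (1 - 2 * d) / d * lam t * mu t * p * lam t ^ (p - 1)
      = 2 * mu t * lam t ^ p := by
    have h1 : lam t ^ (p - 1) * lam t = lam t ^ p := by
      nth_rewrite 2 [← Real.rpow_one (lam t)]
      rw [← Real.rpow_add hlt]
      ring_nf
    have h2 : p * ((1 - 2 * d) / d) = 2 := by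
      field_simp [hp]; rw [hp, div_mul_cancel₀ _ hd2']
    calc (1 - 2 * d) / d * lam t * mu t * p * lam t ^ (p - 1)
        = (p * ((1 - 2 * d) / d)) * (lam t ^ (p - 1) * lam t) * mu t := by ring
      _ = 2 * mu t * lam t ^ p := by rw [h1, h2]; ring
  have : (1 - 2 * d) / d * lam t * mu t * p * lam t ^ (p - 1) *
        (c + mu t ^ 2 + d ^ 2 * lam t ^ 2) +
      lam t ^ p * (-2 * mu t * (c + mu t ^ 2 + d ^ 2 * lam t ^ 2)) = 0 := by
    rw [hkey]; ring
  rw [this] at hmul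
  exact hmul
end
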